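/- Let G and H be finite graphs with the same iterated degree sequence (i.e., not distinguished by colour refinement). Then G and H have a common equitable partition, obtained from the stable colouring of the disjoint union G ⊔ H: the colour classes of the stable colouring restricted to G and to H form equitable partitions with the same parameters and equal corresponding class sizes. -/

import Mathlib

open Finset BigOperators

/-- The type of colours produced after `n` rounds of colour refinement. -/
def WLColor : ℕ → Type
  | 0 => Unit
  | n + 1 => WLColor n × Multiset (WLColor n)

instance wlColorDecEq : ∀ n, DecidableEq (WLColor n)
  | 0 => inferInstanceAs (DecidableEq Unit)
  | n + 1 =>
      letI := wlColorDecEq n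
      inferInstanceAs (DecidableEq (WLColor n × Multiset (WLColor n)))

/-- The colour refinement (1-dimensional Weisfeiler-Leman) colouring: `c₀` is constant
and `c_{n+1}(v) = (c_n(v), {{c_n(w) : w a neighbour of v}})`. -/
def wlColoring {V : Type*} [Fintype V] [DecidableEq V] (G : SimpleGraph V)
    [DecidableRel G.Adj] : (n : ℕ) → V → WLColor n
  | 0, _ => ()
  | n + 1, v => (wlColoring G n v, (G.neighborFinset v).val.map (wlColoring G n))

/-- A colouring `c : V → I` of the vertices of a graph `G` is an equitable partition
with parameters `par` if every vertex of colour `i` has exactly `par i j` neighbours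
of colour `j`. -/
def IsEquitable {V I : Type*} [Fintype V] [DecidableEq V] [DecidableEq I]
    (G : SimpleGraph V) [DecidableRel G.Adj] (c : V → I) (par : I → I → ℕ) : Prop :=
  ∀ (v : V) (j : I), ((G.neighborFinset v).filter (fun w => c w = j)).card = par (c v) j

section Aux

lemma wl_count_aux {α : Type*} {I : Type*} [DecidableEq I] (s : Multiset α) (c : α → I)
    (j : I) : Multiset.card (s.filter (fun u => c u = j)) = Multiset.count j (s.map c) := by
  rw [Multiset.count_map]
  congr 1
  exact Multiset.filter_congr (fun x _ => by constructor <;> intro h <;> exact h.symm)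

lemma exists_eq_of_mono (k : ℕ → ℕ) (hm : ∀ n, k n ≤ k (n+1)) (B : ℕ) (hb : ∀ n, k n ≤ B) :
    ∃ n ≤ B, k n = k (n+1) := by
  by_contra hc
  push_neg at hc
  have key : ∀ n, n ≤ B + 1 → n ≤ k n := by
    intro n
    induction n with
    | zero => omega
    | succ m ih =>
      intro h
      have h1 := hc m (by omega)
      have h2 := hm m
      have h3 := ih (by omega)
      omega
  have h4 := key (B+1) le_rfl
  have h5 := hb (B+1)
  omega

variable {V W : Type*} [Fintype V] [Fintype W] [DecidableEq V] [DecidableEq W]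
  (G : SimpleGraph V) (H : SimpleGraph W) [DecidableRel G.Adj] [DecidableRel H.Adj]

def WLStable (n : ℕ) : Prop :=
  ∃ f : WLColor n → WLColor (n+1),
    (∀ v : V, wlColoring G (n+1) v = f (wlColoring G n v)) ∧
    (∀ w : W, wlColoring H (n+1) w = f (wlColoring H n w))

lemma wlStable_succ {n : ℕ} (h : WLStable G H n) : WLStable G H (n+1) := by
  obtain ⟨f, hG, hH⟩ := h
  refine ⟨fun x => (x, x.2.map f), ?_, ?_⟩
  · intro v
    show (wlColoring G (n+1) v, (G.neighborFinset v).val.map (wlColoring G (n+1)))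
      = (wlColoring G (n+1) v, ((G.neighborFinset v).val.map (wlColoring G n)).map f)
    rw [Multiset.map_map]
    exact Prod.ext rfl (Multiset.map_congr rfl (fun w _ => hG w))
  · intro w
    show (wlColoring H (n+1) w, (H.neighborFinset w).val.map (wlColoring H (n+1)))
      = (wlColoring H (n+1) w, ((H.neighborFinset w).val.map (wlColoring H n)).map f)
    rw [Multiset.map_map]
    exact Prod.ext rfl (Multiset.map_congr rfl (fun u _ => hH u))

lemma wlStable_of_le {n m : ℕ} (hnm : n ≤ m) (h : WLStable G H n) : WLStable G H m := by
  induction m, hnm using Nat.le_induction with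
  | base => exact h
  | succ m _ ih => exact wlStable_succ G H ih

lemma wlStable_exists
    (hIDS : ∀ n : ℕ,
      Multiset.map (wlColoring G n) Finset.univ.val =
        Multiset.map (wlColoring H n) Finset.univ.val) :
    ∃ n ≤ Fintype.card V, WLStable G H n := by
  classical
  set k : ℕ → ℕ := fun n => (Finset.univ.image (wlColoring G n)).card with hk
  have himg : ∀ n, Finset.univ.image (wlColoring G n) =
      (Finset.univ.image (wlColoring G (n+1))).image Prod.fst := by
    intro n
    erw [Finset.image_image]
    rfl
  have hmono : ∀ n, k n ≤ k (n+1) := by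
    intro n
    rw [hk]
    simp only
    rw [himg n]
    exact Finset.card_image_le
  have hbd : ∀ n, k n ≤ Fintype.card V := by
    intro n
    calc k n ≤ Finset.univ.card := Finset.card_image_le
    _ = Fintype.card V := rfl
  obtain ⟨n, hn, heq⟩ := exists_eq_of_mono k hmono (Fintype.card V) hbd
  refine ⟨n, hn, ?_⟩
  -- injectivity of Prod.fst on the image at level n+1
  have hinj : Set.InjOn (α := WLColor (n+1)) (β := WLColor n) Prod.fst
      ↑(Finset.univ.image (wlColoring G (n+1))) := by
    exact Finset.card_image_iff.mp ((congrArg Finset.card (himg n)).symm.trans heq)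
  set f : WLColor n → WLColor (n+1) := fun x =>
    if h : ∃ v : V, wlColoring G n v = x then wlColoring G (n+1) h.choose
    else (x, (0 : Multiset (WLColor n))) with hf
  have hfG : ∀ v : V, wlColoring G (n+1) v = f (wlColoring G n v) := by
    intro v
    have hex : ∃ v' : V, wlColoring G n v' = wlColoring G n v := ⟨v, rfl⟩
    rw [hf]
    refine Eq.trans ?_ (dif_pos hex).symm
    apply hinj (Finset.mem_coe.2 (Finset.mem_image_of_mem _ (Finset.mem_univ _)))
      (Finset.mem_coe.2 (Finset.mem_image_of_mem _ (Finset.mem_univ _)))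
    show wlColoring G n v = wlColoring G n hex.choose
    exact hex.choose_spec.symm
  refine ⟨f, hfG, ?_⟩
  intro w
  have hmem : wlColoring H (n+1) w ∈ Multiset.map (wlColoring G (n+1)) Finset.univ.val := by
    rw [hIDS (n+1)]
    exact Multiset.mem_map_of_mem _ (Finset.mem_univ_val _)
  obtain ⟨v, _, hv⟩ := Multiset.mem_map.1 hmem
  have h1 : wlColoring H n w = wlColoring G n v := by
    have := congrArg Prod.fst hv
    exact this.symm
  rw [h1, ← hfG v, hv]

end Aux


/-- If two finite graphs have the same iterated degree sequence, then the stable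
colour-refinement colouring (reached after at most `2(|V|+|W|)` rounds on the disjoint
union) yields equitable partitions of the two graphs with the same parameters and
corresponding classes of equal size, i.e. a common equitable partition. -/
theorem stmt6 {V W : Type*} [Fintype V] [Fintype W] [DecidableEq V] [DecidableEq W]
    (G : SimpleGraph V) (H : SimpleGraph W) [DecidableRel G.Adj] [DecidableRel H.Adj]
    (hIDS : ∀ n : ℕ,
      Multiset.map (wlColoring G n) Finset.univ.val =
        Multiset.map (wlColoring H n) Finset.univ.val) :
    ∃ par : WLColor (2 * (Fintype.card V + Fintype.card W)) →
        WLColor (2 * (Fintype.card V + Fintype.card W)) → ℕ,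
      IsEquitable G (wlColoring G (2 * (Fintype.card V + Fintype.card W))) par ∧
      IsEquitable H (wlColoring H (2 * (Fintype.card V + Fintype.card W))) par ∧
      ∀ i : WLColor (2 * (Fintype.card V + Fintype.card W)),
        (Finset.univ.filter
          (fun v => wlColoring G (2 * (Fintype.card V + Fintype.card W)) v = i)).card =
        (Finset.univ.filter
          (fun w => wlColoring H (2 * (Fintype.card V + Fintype.card W)) w = i)).card := by
  classical
  set N := 2 * (Fintype.card V + Fintype.card W) with hN
  obtain ⟨n, hn, hst⟩ := wlStable_exists G H hIDS
  have hstab : WLStable G H N := wlStable_of_le G H (by omega) hst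
  obtain ⟨f, hfG, hfH⟩ := hstab
  -- equal colours give equal neighbour-colour multisets
  have keyGG : ∀ v v' : V, wlColoring G N v = wlColoring G N v' →
      (G.neighborFinset v).val.map (wlColoring G N) =
      (G.neighborFinset v').val.map (wlColoring G N) := by
    intro v v' h
    have h1 : wlColoring G (N+1) v = wlColoring G (N+1) v' := by
      rw [hfG v, hfG v', h]
    exact congrArg Prod.snd h1
  have keyGH : ∀ (v : V) (w : W), wlColoring G N v = wlColoring H N w →
      (G.neighborFinset v).val.map (wlColoring G N) =
      (H.neighborFinset w).val.map (wlColoring H N) := by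
    intro v w h
    have h1 : wlColoring G (N+1) v = wlColoring H (N+1) w := by
      rw [hfG v, hfH w, h]
    exact congrArg Prod.snd h1
  have cntG : ∀ (v : V) (j : WLColor N),
      ((G.neighborFinset v).filter (fun u => wlColoring G N u = j)).card =
      Multiset.count j ((G.neighborFinset v).val.map (wlColoring G N)) := by
    intro v j
    exact wl_count_aux _ _ _
  have cntH : ∀ (w : W) (j : WLColor N),
      ((H.neighborFinset w).filter (fun u => wlColoring H N u = j)).card =
      Multiset.count j ((H.neighborFinset w).val.map (wlColoring H N)) := by
    intro w j
    exact wl_count_aux _ _ _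
  refine ⟨fun i j => if h : ∃ v : V, wlColoring G N v = i
      then ((G.neighborFinset h.choose).filter (fun u => wlColoring G N u = j)).card else 0,
    ?_, ?_, ?_⟩
  · intro v j
    have hex : ∃ v' : V, wlColoring G N v' = wlColoring G N v := ⟨v, rfl⟩
    simp only [dif_pos hex]
    rw [cntG, cntG, keyGG hex.choose v hex.choose_spec]
  · intro w j
    have hex : ∃ v : V, wlColoring G N v = wlColoring H N w := by
      have hmem : wlColoring H N w ∈ Multiset.map (wlColoring G N) Finset.univ.val := by
        rw [hIDS N]
        exact Multiset.mem_map_of_mem _ (Finset.mem_univ_val _)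
      obtain ⟨v, _, hv⟩ := Multiset.mem_map.1 hmem
      exact ⟨v, hv⟩
    simp only [dif_pos hex]
    rw [cntG, cntH, keyGH hex.choose w hex.choose_spec]
  · intro i
    have g1 : (Finset.univ.filter (fun v => wlColoring G N v = i)).card =
        Multiset.count i (Finset.univ.val.map (wlColoring G N)) := wl_count_aux _ _ _
    have g2 : (Finset.univ.filter (fun w => wlColoring H N w = i)).card =
        Multiset.count i (Finset.univ.val.map (wlColoring H N)) := wl_count_aux _ _ _
    rw [g1, g2, hIDS N]
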